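/- Under the imputation formulas, the LogDet divergence between the completed matrix Q and the model M equals the LogDet divergence between the visible blocks: LogDet(Q, M) = LogDet(Q_vv, M_vv). In particular, among all completions of Q_vv to a positive definite ℓ×ℓ matrix, the imputed completion minimizes LogDet(Q, M). -/

import Mathlib

open Matrix Finset

noncomputable def logDetDiv {n : Type*} [Fintype n] [DecidableEq n]
    (Q M : Matrix n n ℝ) : ℝ :=
  (1 / 2) * (Real.log M.det - Real.log Q.det + (M⁻¹ * (Q - M)).trace)

section Aux

variable {k : Type*} [Fintype k] [DecidableEq k]

lemma myTrace_eq_sum_eigenvalues {A : Matrix k k ℝ} (hA : A.IsHermitian) :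
    A.trace = ∑ i, hA.eigenvalues i := by
  conv_lhs => rw [hA.spectral_theorem, Unitary.conjStarAlgAut_apply]
  rw [Matrix.trace_mul_cycle]
  rw [(Matrix.mem_unitaryGroup_iff').mp (hA.eigenvectorUnitary).2]
  simp [Matrix.trace_diagonal]

lemma myLog_det_le {A : Matrix k k ℝ} (hA : A.PosDef) :
    Real.log A.det ≤ A.trace - Fintype.card k := by
  rw [hA.isHermitian.det_eq_prod_eigenvalues,
    Real.log_prod (fun i _ => by exact_mod_cast (hA.eigenvalues_pos i).ne'),
    myTrace_eq_sum_eigenvalues hA.isHermitian]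
  have h : ∀ i ∈ Finset.univ (α := k), Real.log (hA.isHermitian.eigenvalues i)
      ≤ hA.isHermitian.eigenvalues i - 1 :=
    fun i _ => Real.log_le_sub_one_of_pos (hA.eigenvalues_pos i)
  calc ∑ i, Real.log ((hA.isHermitian.eigenvalues i : ℝ))
      ≤ ∑ i, (hA.isHermitian.eigenvalues i - 1) := by
        refine Finset.sum_le_sum ?_
        intro i _
        exact_mod_cast h i (Finset.mem_univ i)
    _ = (∑ i, hA.isHermitian.eigenvalues i) - Fintype.card k := by
        rw [Finset.sum_sub_distrib]
        simp [Finset.card_univ]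

lemma myTrace_nonneg {A : Matrix k k ℝ} (hA : A.PosSemidef) : 0 ≤ A.trace := by
  rw [myTrace_eq_sum_eigenvalues hA.1]
  exact Finset.sum_nonneg fun i _ => hA.eigenvalues_nonneg i

lemma myPosDef_of_det {A : Matrix k k ℝ} (hA : A.PosSemidef) (hd : A.det ≠ 0) :
    A.PosDef := by
  refine Matrix.PosDef.of_dotProduct_mulVec_pos hA.1 fun x hx =>
    lt_of_le_of_ne ((posSemidef_iff_dotProduct_mulVec.mp hA).2 x) (Ne.symm fun h => hx ?_)
  have h0 : A *ᵥ x = 0 := (hA.dotProduct_mulVec_zero_iff x).mp h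
  have hinj : Function.Injective A.mulVec :=
    Matrix.mulVec_injective_iff_isUnit.mpr ((Matrix.isUnit_iff_isUnit_det _).2 hd.isUnit)
  have := hinj (h0.trans (Matrix.mulVec_zero A).symm)
  exact this

lemma myPosDef_mul_mul_transpose {W A : Matrix k k ℝ} (hA : A.PosDef)
    (hW : IsUnit W.det) : (W * A * Wᵀ).PosDef := by
  have hAt : Aᵀ = A := by
    have := hA.isHermitian.eq
    rwa [Matrix.conjTranspose_eq_transpose_of_trivial] at this
  refine Matrix.PosDef.of_dotProduct_mulVec_pos ?_ ?_
  · show (W * A * Wᵀ)ᴴ = _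
    rw [Matrix.conjTranspose_eq_transpose_of_trivial, Matrix.transpose_mul,
      Matrix.transpose_mul, Matrix.transpose_transpose, hAt, Matrix.mul_assoc]
  · intro x hx
    have hWt : IsUnit Wᵀ := (Matrix.isUnit_iff_isUnit_det _).2 (by rwa [Matrix.det_transpose])
    have hxW : Wᵀ *ᵥ x ≠ 0 := fun h => hx <|
      (Matrix.mulVec_injective_iff_isUnit.mpr hWt) (h.trans (Matrix.mulVec_zero _).symm)
    have key := hA.dotProduct_mulVec_pos hxW
    have : star x ⬝ᵥ (W * A * Wᵀ) *ᵥ x = star (Wᵀ *ᵥ x) ⬝ᵥ A *ᵥ (Wᵀ *ᵥ x) := by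
      rw [← Matrix.mulVec_mulVec, ← Matrix.mulVec_mulVec]
      rw [star_trivial, star_trivial, Matrix.dotProduct_mulVec]
      congr 1
      rw [← Matrix.vecMul_transpose, Matrix.transpose_transpose]
    rw [this]
    exact key

open scoped MatrixOrder in
lemma myTrace_inv_mul_nonneg {S G : Matrix k k ℝ} (hS : S.PosDef) (hG : G.PosSemidef) :
    0 ≤ (S⁻¹ * G).trace := by
  set T := CFC.sqrt S⁻¹ with hT
  have hTT : T * T = S⁻¹ := CFC.sqrt_mul_sqrt_self _ hS.inv.posSemidef.nonneg
  have hTh : Tᴴ = T := (Matrix.nonneg_iff_posSemidef.mp (CFC.sqrt_nonneg S⁻¹)).1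
  have h1 : (S⁻¹ * G).trace = (Tᴴ * G * T).trace := by
    rw [hTh, ← hTT, Matrix.trace_mul_cycle T G T]
  rw [h1]
  exact myTrace_nonneg (hG.conjTranspose_mul_mul_same T)

open scoped MatrixOrder in
lemma myLogDetDiv_nonneg {A B : Matrix k k ℝ} (hA : A.PosDef) (hB : B.PosDef) :
    0 ≤ logDetDiv A B := by
  set T := CFC.sqrt B⁻¹ with hT
  have hTT : T * T = B⁻¹ := CFC.sqrt_mul_sqrt_self _ hB.inv.posSemidef.nonneg
  have hTh : Tᵀ = T := by
    have h := (Matrix.nonneg_iff_posSemidef.mp (CFC.sqrt_nonneg B⁻¹)).1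
    rw [← Matrix.conjTranspose_eq_transpose_of_trivial]
    exact h
  have hTdet : IsUnit T.det := by
    have h2 : T.det * T.det = B⁻¹.det := by rw [← Matrix.det_mul, hTT]
    have : B⁻¹.det ≠ 0 := hB.inv.det_pos.ne'
    exact (by intro h0; rw [h0, zero_mul] at h2; exact this h2.symm : T.det ≠ 0).isUnit
  have hX : (T * A * T).PosDef := by
    have := myPosDef_mul_mul_transpose hA hTdet
    rwa [hTh] at this
  have hdet : (T * A * T).det = B⁻¹.det * A.det := by
    rw [Matrix.det_mul, Matrix.det_mul, mul_comm, ← mul_assoc, ← Matrix.det_mul, hTT]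
  have htr : (T * A * T).trace = (B⁻¹ * A).trace := by
    rw [Matrix.trace_mul_cycle T A T, hTT]
  have key := myLog_det_le hX
  rw [hdet, htr] at key
  have hlog : Real.log (B⁻¹.det * A.det) = Real.log A.det - Real.log B.det := by
    rw [Real.log_mul hB.inv.det_pos.ne' hA.det_pos.ne', Matrix.det_nonsing_inv,
      Ring.inverse_eq_inv, Real.log_inv]
    ring
  rw [hlog] at key
  have htr2 : (B⁻¹ * (A - B)).trace = (B⁻¹ * A).trace - Fintype.card k := by
    rw [Matrix.mul_sub, Matrix.nonsing_inv_mul _ hB.det_pos.ne'.isUnit,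
      Matrix.trace_sub, Matrix.trace_one]
  unfold logDetDiv
  rw [htr2]
  linarith

end Aux
section Aux2

variable {k : Type*} [Fintype k] [DecidableEq k]

lemma myLogDetDiv_congr {W P D : Matrix k k ℝ} (hW : IsUnit W.det) (hdet : W.det = 1) :
    logDetDiv (W * P * Wᵀ) (W * D * Wᵀ) = logDetDiv P D := by
  haveI := W.invertibleOfIsUnitDet hW
  haveI := Wᵀ.invertibleOfIsUnitDet (by rwa [Matrix.det_transpose])
  have h1 : (W * P * Wᵀ).det = P.det := by
    rw [Matrix.det_mul, Matrix.det_mul, Matrix.det_transpose, hdet]; ring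
  have h2 : (W * D * Wᵀ).det = D.det := by
    rw [Matrix.det_mul, Matrix.det_mul, Matrix.det_transpose, hdet]; ring
  have h3 : (W * D * Wᵀ)⁻¹ * (W * P * Wᵀ - W * D * Wᵀ) = (Wᵀ)⁻¹ * (D⁻¹ * (P - D)) * Wᵀ := by
    have hs : W * P * Wᵀ - W * D * Wᵀ = W * ((P - D) * Wᵀ) := by
      simp only [Matrix.mul_sub, Matrix.sub_mul, Matrix.mul_assoc]
    rw [hs, Matrix.mul_inv_rev, Matrix.mul_inv_rev]
    simp only [Matrix.mul_assoc]
    rw [Matrix.inv_mul_cancel_left_of_invertible]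
  have h4 : ((Wᵀ)⁻¹ * (D⁻¹ * (P - D)) * Wᵀ).trace = (D⁻¹ * (P - D)).trace := by
    rw [Matrix.trace_mul_cycle, ← Matrix.mul_assoc, Matrix.mul_inv_of_invertible, Matrix.one_mul]
  unfold logDetDiv
  rw [h1, h2, h3, h4]

end Aux2
section Aux3

variable {p q : Type*} [Fintype p] [DecidableEq p] [Fintype q] [DecidableEq q]

lemma myTrace_fromBlocks (A : Matrix p p ℝ) (B : Matrix p q ℝ) (C : Matrix q p ℝ)
    (D : Matrix q q ℝ) :
    (fromBlocks A B C D).trace = A.trace + D.trace := by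
  simp [Matrix.trace, Fintype.sum_sum_type, Matrix.fromBlocks, Matrix.diag]

lemma myInv_fromBlocks_diag {A : Matrix p p ℝ} {D : Matrix q q ℝ}
    (hA : IsUnit A.det) (hD : IsUnit D.det) :
    (fromBlocks A 0 0 D)⁻¹ = fromBlocks A⁻¹ 0 0 D⁻¹ := by
  apply Matrix.inv_eq_right_inv
  rw [Matrix.fromBlocks_multiply]
  simp only [Matrix.mul_nonsing_inv _ hA, Matrix.mul_nonsing_inv _ hD, Matrix.mul_zero,
    Matrix.zero_mul, add_zero, zero_add, Matrix.fromBlocks_one]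

lemma myPosDef_fromBlocks_left {A : Matrix p p ℝ} {B : Matrix p q ℝ} {C : Matrix q p ℝ}
    {D : Matrix q q ℝ} (h : (fromBlocks A B C D).PosDef) : A.PosDef := by
  refine Matrix.PosDef.of_dotProduct_mulVec_pos ?_ ?_
  · have h1 := h.1.eq
    rw [Matrix.fromBlocks_conjTranspose] at h1
    have h2 := congrArg Matrix.toBlocks₁₁ h1
    simpa [Matrix.toBlocks_fromBlocks₁₁, Matrix.IsSymm] using h2
  · intro x hx
    have hne : Sum.elim x (0 : q → ℝ) ≠ 0 := by
      intro h0
      apply hx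
      funext i
      exact congrFun h0 (Sum.inl i)
    have hp := h.dotProduct_mulVec_pos hne
    rw [Matrix.fromBlocks_mulVec] at hp
    simpa [sumElim_dotProduct_sumElim] using hp

lemma myLogDetDiv_fromBlocks {A : Matrix p p ℝ} {S : Matrix q q ℝ}
    (hA : A.PosDef) (hS : S.PosDef)
    {Qv : Matrix p p ℝ} (hQv : Qv.PosDef) (B : Matrix p q ℝ) (C : Matrix q q ℝ)
    (hE : (C - Bᵀ * Qv⁻¹ * B).PosDef) :
    logDetDiv (fromBlocks Qv B Bᵀ C) (fromBlocks A 0 0 S)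
      = logDetDiv Qv A + logDetDiv (C - Bᵀ * Qv⁻¹ * B) S
        + (1/2) * (S⁻¹ * (Bᵀ * Qv⁻¹ * B)).trace := by
  haveI := Qv.invertibleOfIsUnitDet hQv.det_pos.ne'.isUnit
  have hdetP : (fromBlocks Qv B Bᵀ C).det = Qv.det * (C - Bᵀ * Qv⁻¹ * B).det := by
    rw [Matrix.det_fromBlocks₁₁, Matrix.invOf_eq_nonsing_inv]
  have hdetD : (fromBlocks A 0 0 S).det = A.det * S.det := Matrix.det_fromBlocks_zero₂₁ _ _ _
  have hinv : (fromBlocks A 0 0 S)⁻¹ = fromBlocks A⁻¹ 0 0 S⁻¹ :=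
    myInv_fromBlocks_diag hA.det_pos.ne'.isUnit hS.det_pos.ne'.isUnit
  have hsub : fromBlocks Qv B Bᵀ C - fromBlocks A 0 0 S
      = fromBlocks (Qv - A) B Bᵀ (C - S) := by
    ext (i | i) (j | j) <;> simp [Matrix.fromBlocks, Matrix.sub_apply]
  have hmul : fromBlocks A⁻¹ 0 0 S⁻¹ * fromBlocks (Qv - A) B Bᵀ (C - S)
      = fromBlocks (A⁻¹ * (Qv - A)) (A⁻¹ * B) (S⁻¹ * Bᵀ) (S⁻¹ * (C - S)) := by
    rw [Matrix.fromBlocks_multiply]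
    simp
  have htrC : (S⁻¹ * (C - S)).trace
      = (S⁻¹ * ((C - Bᵀ * Qv⁻¹ * B) - S)).trace + (S⁻¹ * (Bᵀ * Qv⁻¹ * B)).trace := by
    rw [← Matrix.trace_add, ← Matrix.mul_add]
    congr 2
    abel
  unfold logDetDiv
  rw [hdetP, hdetD, hinv, hsub, hmul, myTrace_fromBlocks, htrC,
    Real.log_mul hA.det_pos.ne' hS.det_pos.ne',
    Real.log_mul hQv.det_pos.ne' hE.det_pos.ne']
  ring

end Aux3
theorem imputed_completion_logDetDiv {n m : ℕ}
    (Mvv : Matrix (Fin n) (Fin n) ℝ) (Mvh : Matrix (Fin n) (Fin m) ℝ)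
    (Mhh : Matrix (Fin m) (Fin m) ℝ)
    (hM : (Matrix.fromBlocks Mvv Mvh Mvhᵀ Mhh).PosDef)
    (Qvv : Matrix (Fin n) (Fin n) ℝ) (hQvv : Qvv.PosDef)
    (Q : Matrix (Fin n ⊕ Fin m) (Fin n ⊕ Fin m) ℝ)
    (hQ : Q = Matrix.fromBlocks Qvv (Qvv * Mvv⁻¹ * Mvh) (Qvv * Mvv⁻¹ * Mvh)ᵀ
      (Mhh - Mvhᵀ * Mvv⁻¹ * Mvh + Mvhᵀ * Mvv⁻¹ * Qvv * Mvv⁻¹ * Mvh)) :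
    logDetDiv Q (Matrix.fromBlocks Mvv Mvh Mvhᵀ Mhh) = logDetDiv Qvv Mvv ∧
      ∀ (Qvh' : Matrix (Fin n) (Fin m) ℝ) (Qhh' : Matrix (Fin m) (Fin m) ℝ),
        (Matrix.fromBlocks Qvv Qvh' Qvh'ᵀ Qhh').PosDef →
        logDetDiv Q (Matrix.fromBlocks Mvv Mvh Mvhᵀ Mhh) ≤
          logDetDiv (Matrix.fromBlocks Qvv Qvh' Qvh'ᵀ Qhh')
            (Matrix.fromBlocks Mvv Mvh Mvhᵀ Mhh) := by
  have hMvv : Mvv.PosDef := myPosDef_fromBlocks_left hM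
  haveI := Mvv.invertibleOfIsUnitDet hMvv.det_pos.ne'.isUnit
  have hMvvT : Mvvᵀ = Mvv := by
    have h := hMvv.1
    rwa [Matrix.IsHermitian, Matrix.conjTranspose_eq_transpose_of_trivial] at h
  have hQvvT : Qvvᵀ = Qvv := by
    have h := hQvv.1
    rwa [Matrix.IsHermitian, Matrix.conjTranspose_eq_transpose_of_trivial] at h
  have hMvvinvT : Mvv⁻¹ᵀ = Mvv⁻¹ := by rw [Matrix.transpose_nonsing_inv, hMvvT]
  set S := Mhh - Mvhᵀ * Mvv⁻¹ * Mvh with hSdef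
  set K := Mvhᵀ * Mvv⁻¹ with hKdef
  have hKT : Kᵀ = Mvv⁻¹ * Mvh := by
    rw [hKdef, Matrix.transpose_mul, hMvvinvT, Matrix.transpose_transpose]
  have hK1 : K * Mvv = Mvhᵀ := by
    rw [hKdef, Matrix.mul_assoc, Matrix.nonsing_inv_mul _ hMvv.det_pos.ne'.isUnit,
      Matrix.mul_one]
  have hK2 : Mvv * Kᵀ = Mvh := by
    rw [hKT, ← Matrix.mul_assoc, Matrix.mul_nonsing_inv _ hMvv.det_pos.ne'.isUnit,
      Matrix.one_mul]
  have hK6 : K * Mvv * Kᵀ = Mvhᵀ * Mvv⁻¹ * Mvh := by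
    rw [hK1, hKT, ← Matrix.mul_assoc]
  -- S is positive definite
  have hdetM : (Matrix.fromBlocks Mvv Mvh Mvhᵀ Mhh).det = Mvv.det * S.det := by
    rw [Matrix.det_fromBlocks₁₁, Matrix.invOf_eq_nonsing_inv]
  have hSdet : S.det ≠ 0 := by
    intro h0
    have := hM.det_pos
    rw [hdetM, h0, mul_zero] at this
    exact lt_irrefl _ this
  have hSpsd : S.PosSemidef := by
    have h := hM.posSemidef
    rw [show (Mvhᵀ : Matrix (Fin m) (Fin n) ℝ) = Mvhᴴ from
      (Matrix.conjTranspose_eq_transpose_of_trivial Mvh).symm] at h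
    have h2 := (Matrix.PosDef.fromBlocks₁₁ Mvh Mhh hMvv).mp h
    rwa [Matrix.conjTranspose_eq_transpose_of_trivial] at h2
  have hSpd : S.PosDef := myPosDef_of_det hSpsd hSdet
  -- the congruence matrices
  set W : Matrix (Fin n ⊕ Fin m) (Fin n ⊕ Fin m) ℝ := Matrix.fromBlocks 1 0 K 1 with hWdef
  set Wi : Matrix (Fin n ⊕ Fin m) (Fin n ⊕ Fin m) ℝ := Matrix.fromBlocks 1 0 (-K) 1 with hWidef
  have hWdet : W.det = 1 := by rw [hWdef, Matrix.det_fromBlocks_zero₁₂]; simp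
  have hWidet : Wi.det = 1 := by rw [hWidef, Matrix.det_fromBlocks_zero₁₂]; simp
  have hWunit : IsUnit W.det := by rw [hWdet]; exact isUnit_one
  have hWiunit : IsUnit Wi.det := by rw [hWidet]; exact isUnit_one
  have hWWi : W * Wi = 1 := by
    rw [hWdef, hWidef, Matrix.fromBlocks_multiply]
    simp [Matrix.fromBlocks_one]
  have hWT : Wᵀ = Matrix.fromBlocks 1 Kᵀ 0 1 := by
    rw [hWdef, Matrix.fromBlocks_transpose]
    simp
  have hWiT : Wiᵀ = Matrix.fromBlocks 1 (-Kᵀ) 0 1 := by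
    rw [hWidef, Matrix.fromBlocks_transpose]
    simp
  set D0 : Matrix (Fin n ⊕ Fin m) (Fin n ⊕ Fin m) ℝ := Matrix.fromBlocks Mvv 0 0 S with hD0def
  -- general sandwich computation
  have hsand : ∀ (X : Matrix (Fin n) (Fin n) ℝ),
      W * (Matrix.fromBlocks X 0 0 S) * Wᵀ
        = Matrix.fromBlocks X (X * Kᵀ) (K * X) (K * X * Kᵀ + S) := by
    intro X
    rw [hWT, hWdef, Matrix.fromBlocks_multiply, Matrix.fromBlocks_multiply]
    congr 1 <;> simp [Matrix.mul_assoc]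
  have hMfac : W * D0 * Wᵀ = Matrix.fromBlocks Mvv Mvh Mvhᵀ Mhh := by
    rw [hD0def, hsand, hK6, hK2, hK1, Matrix.fromBlocks_inj]
    refine ⟨rfl, rfl, rfl, ?_⟩
    rw [hSdef]
    abel
  -- Part 1
  have part1 : logDetDiv Q (Matrix.fromBlocks Mvv Mvh Mvhᵀ Mhh) = logDetDiv Qvv Mvv := by
    have hQfac : W * (Matrix.fromBlocks Qvv 0 0 S) * Wᵀ = Q := by
      rw [hsand, hQ]
      have e1 : Qvv * Kᵀ = Qvv * Mvv⁻¹ * Mvh := by rw [hKT, Matrix.mul_assoc]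
      have e2 : K * Qvv = (Qvv * Mvv⁻¹ * Mvh)ᵀ := by
        rw [Matrix.transpose_mul, Matrix.transpose_mul, hMvvinvT, hQvvT, hKdef,
          Matrix.mul_assoc]
      have e3 : K * Qvv * Kᵀ = Mvhᵀ * Mvv⁻¹ * Qvv * Mvv⁻¹ * Mvh := by
        rw [hKdef, hKT]
        simp only [Matrix.mul_assoc]
      rw [e3, e1, e2, Matrix.fromBlocks_inj]
      refine ⟨rfl, rfl, rfl, ?_⟩
      rw [hSdef]
      abel
    rw [← hQfac, ← hMfac, myLogDetDiv_congr hWunit hWdet]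
    have hzero : (Matrix.fromBlocks Qvv 0 0 S : Matrix (Fin n ⊕ Fin m) (Fin n ⊕ Fin m) ℝ)
        = Matrix.fromBlocks Qvv (0 : Matrix (Fin n) (Fin m) ℝ)
            (0 : Matrix (Fin n) (Fin m) ℝ)ᵀ S := by
      rw [Matrix.transpose_zero]
    have hE0 : (S - (0 : Matrix (Fin n) (Fin m) ℝ)ᵀ * Qvv⁻¹ * (0 : Matrix (Fin n) (Fin m) ℝ)).PosDef := by
      simpa using hSpd
    rw [hD0def, hzero, myLogDetDiv_fromBlocks hMvv hSpd hQvv _ _ hE0]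
    simp [logDetDiv]
  refine ⟨part1, ?_⟩
  -- Part 2
  intro B' C' hQ'
  set Q' := Matrix.fromBlocks Qvv B' B'ᵀ C' with hQ'def
  set P := Wi * Q' * Wiᵀ with hPdef
  have hPpos : P.PosDef := myPosDef_mul_mul_transpose hQ' hWiunit
  have hQ'fac : W * P * Wᵀ = Q' := by
    have h : W * (Wi * Q' * Wiᵀ) * Wᵀ = (W * Wi) * Q' * (W * Wi)ᵀ := by
      rw [Matrix.transpose_mul]
      simp only [Matrix.mul_assoc]
    rw [hPdef, h, hWWi]
    simp
  set Bn := B' - Qvv * Kᵀ with hBndef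
  set Cn := K * Qvv * Kᵀ - B'ᵀ * Kᵀ - K * B' + C' with hCndef
  have hPblocks : P = Matrix.fromBlocks Qvv Bn Bnᵀ Cn := by
    have hBnT : Bnᵀ = B'ᵀ - K * Qvv := by
      rw [hBndef, Matrix.transpose_sub, Matrix.transpose_mul, Matrix.transpose_transpose,
        hQvvT]
    rw [hPdef, hQ'def, hWiT, hWidef, Matrix.fromBlocks_multiply, Matrix.fromBlocks_multiply,
      Matrix.fromBlocks_inj]
    refine ⟨by simp, by simp [hBndef]; abel, by simp [hBnT]; abel, ?_⟩
    simp only [Matrix.one_mul, Matrix.mul_one, Matrix.zero_mul, Matrix.mul_zero, add_zero,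
      zero_add, Matrix.neg_mul, Matrix.mul_neg, Matrix.add_mul, Matrix.sub_mul]
    rw [hCndef]
    abel
  set E := Cn - Bnᵀ * Qvv⁻¹ * Bn with hEdef
  haveI := Qvv.invertibleOfIsUnitDet hQvv.det_pos.ne'.isUnit
  have hdetP : P.det = Qvv.det * E.det := by
    rw [hPblocks, Matrix.det_fromBlocks₁₁, Matrix.invOf_eq_nonsing_inv]
  have hEpsd : E.PosSemidef := by
    have h := hPpos.posSemidef
    rw [hPblocks] at h
    rw [show (Bnᵀ : Matrix (Fin m) (Fin n) ℝ) = Bnᴴ from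
      (Matrix.conjTranspose_eq_transpose_of_trivial Bn).symm] at h
    have h2 := (Matrix.PosDef.fromBlocks₁₁ Bn Cn hQvv).mp h
    rwa [Matrix.conjTranspose_eq_transpose_of_trivial] at h2
  have hEdet : E.det ≠ 0 := by
    intro h0
    have := hPpos.det_pos
    rw [hdetP, h0, mul_zero] at this
    exact lt_irrefl _ this
  have hEpd : E.PosDef := myPosDef_of_det hEpsd hEdet
  have hGpsd : (Bnᵀ * Qvv⁻¹ * Bn).PosSemidef := by
    have h := hQvv.inv.posSemidef.conjTranspose_mul_mul_same Bn
    rwa [Matrix.conjTranspose_eq_transpose_of_trivial] at h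
  have key : logDetDiv Q' (Matrix.fromBlocks Mvv Mvh Mvhᵀ Mhh)
      = logDetDiv Qvv Mvv + logDetDiv E S
        + (1/2) * (S⁻¹ * (Bnᵀ * Qvv⁻¹ * Bn)).trace := by
    rw [← hQ'fac, ← hMfac, myLogDetDiv_congr hWunit hWdet, hPblocks, hD0def,
      myLogDetDiv_fromBlocks hMvv hSpd hQvv Bn Cn (hEdef ▸ hEpd)]
  rw [part1, key]
  have h1 := myLogDetDiv_nonneg hEpd hSpd
  have h2 := myTrace_inv_mul_nonneg hSpd hGpsd
  linarith
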